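/- Let T be the quartet tree metric (12|34) on 4 taxa with pendant weights e₁,e₂,e₃,e₄ > 0 and internal weight g > 0, that is, T(1,2)=e₁+e₂, T(3,4)=e₃+e₄, and T(i,j)=e_i+g+e_j for i∈{1,2}, j∈{3,4}. Then T is the tropical mixture of two star tree metrics on 4 taxa if and only if (e₁ > g and e₂ > g) or (e₃ > g and e₄ > g). -/

import Mathlib

/-- A star tree metric on `n` taxa: a dissimilarity map of the form
`D(i,j) = e i + e j` for `i ≠ j` (and `D(i,i) = 0`) with all pendant weights positive. -/
def IsStarTreeMetric {n : ℕ} (D : Fin n → Fin n → ℝ) : Prop :=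
  ∃ e : Fin n → ℝ, (∀ i, 0 < e i) ∧ (∀ i, D i i = 0) ∧
    ∀ i j, i ≠ j → D i j = e i + e j

/-- `T` is the tropical mixture (pointwise maximum) of two star tree metrics. -/
def IsMixtureOfTwoStars {n : ℕ} (T : Fin n → Fin n → ℝ) : Prop :=
  ∃ D Dbar : Fin n → Fin n → ℝ, IsStarTreeMetric D ∧ IsStarTreeMetric Dbar ∧
    ∀ i j, T i j = max (D i j) (Dbar i j)

/-- The quartet tree metric (12|34) on 4 taxa with pendant weights `e` and internal
edge weight `g`: leaves `0,1` on one side, leaves `2,3` on the other. -/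
def quartetMetric (e : Fin 4 → ℝ) (g : ℝ) : Fin 4 → Fin 4 → ℝ :=
  fun i j => if i = j then 0
    else e i + e j + (if decide (i.val < 2) ≠ decide (j.val < 2) then g else 0)

/-- Star metric built from a weight function. -/
def starOf (w : Fin 4 → ℝ) : Fin 4 → Fin 4 → ℝ :=
  fun i j => if i = j then 0 else w i + w j

lemma starOf_isStar (w : Fin 4 → ℝ) (hw : ∀ i, 0 < w i) : IsStarTreeMetric (starOf w) :=
  ⟨w, hw, fun i => by simp [starOf], fun i j hij => by simp [starOf, hij]⟩

/-- The quartet (12|34) with pendant weights `e₁,e₂,e₃,e₄ > 0` and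
internal weight `g > 0` is a tropical mixture of two star tree metrics iff
(`e₁ > g` and `e₂ > g`) or (`e₃ > g` and `e₄ > g`). -/
theorem quartet_is_mixture_iff (e : Fin 4 → ℝ) (he : ∀ i, 0 < e i)
    (g : ℝ) (hg : 0 < g) :
    IsMixtureOfTwoStars (quartetMetric e g) ↔
      (g < e 0 ∧ g < e 1) ∨ (g < e 2 ∧ g < e 3) := by
  constructor
  · rintro ⟨D, Db, ⟨a, ha, -, haD⟩, ⟨b, hb, -, hbD⟩, hmax⟩
    have key : ∀ i j : Fin 4, i ≠ j →
        quartetMetric e g i j = max (a i + a j) (b i + b j) := fun i j hij => by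
      rw [hmax, haD i j hij, hbD i j hij]
    have H01 := key 0 1 (by decide); have H23 := key 2 3 (by decide)
    have H02 := key 0 2 (by decide); have H03 := key 0 3 (by decide)
    have H12 := key 1 2 (by decide); have H13 := key 1 3 (by decide)
    norm_num [quartetMetric, Fin.ext_iff, show ((3:Fin 4):ℕ) = 3 from rfl,
      show ((2:Fin 4):ℕ) = 2 from rfl, show ((1:Fin 4):ℕ) = 1 from rfl,
      show ((0:Fin 4):ℕ) = 0 from rfl] at H01 H23 H02 H03 H12 H13
    have ha0 := ha 0; have ha1 := ha 1; have ha2 := ha 2; have ha3 := ha 3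
    have hb0 := hb 0; have hb1 := hb 1; have hb2 := hb 2; have hb3 := hb 3
    have la : a 0 + a 1 ≤ e 0 + e 1 := H01 ▸ le_max_left _ _
    have lb : b 0 + b 1 ≤ e 0 + e 1 := H01 ▸ le_max_right _ _
    have la' : a 2 + a 3 ≤ e 2 + e 3 := H23 ▸ le_max_left _ _
    have lb' : b 2 + b 3 ≤ e 2 + e 3 := H23 ▸ le_max_right _ _
    have l02a : a 0 + a 2 ≤ e 0 + e 2 + g := H02 ▸ le_max_left _ _
    have l02b : b 0 + b 2 ≤ e 0 + e 2 + g := H02 ▸ le_max_right _ _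
    have l03a : a 0 + a 3 ≤ e 0 + e 3 + g := H03 ▸ le_max_left _ _
    have l03b : b 0 + b 3 ≤ e 0 + e 3 + g := H03 ▸ le_max_right _ _
    have l12a : a 1 + a 2 ≤ e 1 + e 2 + g := H12 ▸ le_max_left _ _
    have l12b : b 1 + b 2 ≤ e 1 + e 2 + g := H12 ▸ le_max_right _ _
    have l13a : a 1 + a 3 ≤ e 1 + e 3 + g := H13 ▸ le_max_left _ _
    have l13b : b 1 + b 3 ≤ e 1 + e 3 + g := H13 ▸ le_max_right _ _
    have c02 := (max_choice (a 0 + a 2) (b 0 + b 2)).imp (H02.trans) (H02.trans)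
    have c03 := (max_choice (a 0 + a 3) (b 0 + b 3)).imp (H03.trans) (H03.trans)
    have c12 := (max_choice (a 1 + a 2) (b 1 + b 2)).imp (H12.trans) (H12.trans)
    have c13 := (max_choice (a 1 + a 3) (b 1 + b 3)).imp (H13.trans) (H13.trans)
    rcases c02 with h02 | h02 <;> rcases c03 with h03 | h03 <;>
      rcases c12 with h12 | h12 <;> rcases c13 with h13 | h13 <;>
      first
      | (left; exact ⟨by linarith, by linarith⟩)
      | (right; exact ⟨by linarith, by linarith⟩)
      | (exfalso; linarith)
  · rintro (⟨h0, h1⟩ | ⟨h2, h3⟩)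
    · refine ⟨starOf ![e 0 - g, e 1 + g, e 2, e 3], starOf ![e 0 + g, e 1 - g, e 2, e 3],
        starOf_isStar _ ?_, starOf_isStar _ ?_, ?_⟩
      · intro i; fin_cases i <;> simp <;> [linarith [he 0]; linarith [he 1]; exact he 2; exact he 3]
      · intro i; fin_cases i <;> simp <;> [linarith [he 0]; linarith [he 1]; exact he 2; exact he 3]
      · intro i j
        fin_cases i <;> fin_cases j <;>
          norm_num [quartetMetric, starOf, Fin.ext_iff,
            show ∀ h : 0 < 4, (⟨0,h⟩:Fin 4) = 0 from fun _ => rfl,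
            show ∀ h : 1 < 4, (⟨1,h⟩:Fin 4) = 1 from fun _ => rfl,
            show ∀ h : 2 < 4, (⟨2,h⟩:Fin 4) = 2 from fun _ => rfl,
            show ∀ h : 3 < 4, (⟨3,h⟩:Fin 4) = 3 from fun _ => rfl,
            show ((3:Fin 4):ℕ) = 3 from rfl, show ((2:Fin 4):ℕ) = 2 from rfl,
            show ((1:Fin 4):ℕ) = 1 from rfl, show ((0:Fin 4):ℕ) = 0 from rfl,
            Matrix.cons_val_two, Matrix.cons_val_three, Matrix.vecHead, Matrix.vecTail] <;>
          first
          | rw [max_self]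
          | rw [max_eq_left (by linarith)] <;> ring
          | rw [max_eq_right (by linarith)] <;> ring
          | (symm; rw [max_eq_left (by linarith)]; ring)
          | (symm; rw [max_eq_right (by linarith)]; ring)
    · refine ⟨starOf ![e 0, e 1, e 2 - g, e 3 + g], starOf ![e 0, e 1, e 2 + g, e 3 - g],
        starOf_isStar _ ?_, starOf_isStar _ ?_, ?_⟩
      · intro i; fin_cases i <;> simp <;> [exact he 0; exact he 1; linarith [he 2]; linarith [he 3]]
      · intro i; fin_cases i <;> simp <;> [exact he 0; exact he 1; linarith [he 2]; linarith [he 3]]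
      · intro i j
        fin_cases i <;> fin_cases j <;>
          norm_num [quartetMetric, starOf, Fin.ext_iff,
            show ∀ h : 0 < 4, (⟨0,h⟩:Fin 4) = 0 from fun _ => rfl,
            show ∀ h : 1 < 4, (⟨1,h⟩:Fin 4) = 1 from fun _ => rfl,
            show ∀ h : 2 < 4, (⟨2,h⟩:Fin 4) = 2 from fun _ => rfl,
            show ∀ h : 3 < 4, (⟨3,h⟩:Fin 4) = 3 from fun _ => rfl,
            show ((3:Fin 4):ℕ) = 3 from rfl, show ((2:Fin 4):ℕ) = 2 from rfl,
            show ((1:Fin 4):ℕ) = 1 from rfl, show ((0:Fin 4):ℕ) = 0 from rfl,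
            Matrix.cons_val_two, Matrix.cons_val_three, Matrix.vecHead, Matrix.vecTail] <;>
          first
          | rw [max_self]
          | rw [max_eq_left (by linarith)] <;> ring
          | rw [max_eq_right (by linarith)] <;> ring
          | (symm; rw [max_eq_left (by linarith)]; ring)
          | (symm; rw [max_eq_right (by linarith)]; ring)
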